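/- For any 2×2 nonnegative matrix M = [[a,b],[c,d]] with all entries positive, d_∞(M) ≤ d_H(M), i.e. |a/(a+c) - b/(b+d)| ≤ |log(ad/(bc))|. -/

import Mathlib

lemma key_ineq (x y : ℝ) (hy : 0 < y) (hxy : y ≤ x) :
    x / (x + 1) - y / (y + 1) ≤ Real.log (x / y) := by
  have hx : 0 < x := lt_of_lt_of_le hy hxy
  have h1 : Real.log (y / x) ≤ y / x - 1 :=
    Real.log_le_sub_one_of_pos (div_pos hy hx)
  have hlog : Real.log (x / y) = - Real.log (y / x) := by
    rw [← Real.log_inv]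
    congr 1
    field_simp
  have h2 : (x - y) / x ≤ Real.log (x / y) := by
    rw [hlog]
    have : (x - y) / x = 1 - y / x := by field_simp
    linarith [h1, this.le]
  have h3 : x / (x + 1) - y / (y + 1) = (x - y) / ((x + 1) * (y + 1)) := by
    field_simp
    ring
  have h4 : (x - y) / ((x + 1) * (y + 1)) ≤ (x - y) / x := by
    apply div_le_div_of_nonneg_left (by linarith) hx
    nlinarith
  linarith [h3.le, h4, h2]

theorem dinf_le_dH (a b c d : ℝ)
    (ha : 0 < a) (hb : 0 < b) (hc : 0 < c) (hd : 0 < d) :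
    |a / (a + c) - b / (b + d)| ≤ |Real.log (a * d / (b * c))| := by
  set x := a / c with hxdef
  set y := b / d with hydef
  have hx : 0 < x := div_pos ha hc
  have hy : 0 < y := div_pos hb hd
  have e1 : a / (a + c) = x / (x + 1) := by
    field_simp [hxdef]
    rw [hxdef]
    field_simp
  have e2 : b / (b + d) = y / (y + 1) := by
    field_simp [hydef]
    rw [hydef]
    field_simp
  have e3 : a * d / (b * c) = x / y := by
    field_simp [hxdef, hydef]
    rw [hxdef, hydef]
    field_simp
  rw [e1, e2, e3]
  rcases le_total y x with h | h
  · have h1 := key_ineq x y hy h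
    have hnn : 0 ≤ x / (x + 1) - y / (y + 1) := by
      have hmono : y / (y + 1) ≤ x / (x + 1) := by
        rw [div_le_div_iff₀ (by linarith) (by linarith)]
        nlinarith
      linarith
    rw [abs_of_nonneg hnn]
    exact h1.trans (le_abs_self _)
  · have h1 := key_ineq y x hx h
    have hnn : x / (x + 1) - y / (y + 1) ≤ 0 := by
      have hmono : x / (x + 1) ≤ y / (y + 1) := by
        rw [div_le_div_iff₀ (by linarith) (by linarith)]
        nlinarith
      linarith
    rw [abs_of_nonpos hnn]
    have : Real.log (y / x) = - Real.log (x / y) := by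
      rw [← Real.log_inv]; congr 1; field_simp
    rw [this] at h1
    calc -(x / (x + 1) - y / (y + 1)) = y / (y + 1) - x / (x + 1) := by ring
      _ ≤ - Real.log (x / y) := h1
      _ ≤ |Real.log (x / y)| := neg_le_abs _
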